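/- Let H be a complex Hilbert space and let X and B be closed subspaces of H forming a Fredholm pair. Set F := X ∩ B and W := (X + B) ∩ Xᗮ, where Xᗮ is the orthogonal complement of X. Then W is a closed subspace of Xᗮ, and there exists a continuous linear map φ : W → X (with W carrying the subspace topology) such that B = F + {w + φ(w) : w ∈ W} and F ∩ {w + φ(w) : w ∈ W} = {0}; i.e., B is the internal direct sum of the finite-dimensional subspace F and the graph of φ. -/

import Mathlib

open Module

/-- A pair `(X, Y)` of closed subspaces of a complex Hilbert (or normed) space `H`
is a *Fredholm pair* if `X ∩ Y` is finite-dimensional, `X + Y` is closed, and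
`H / (X + Y)` is finite-dimensional. -/
def IsFredholmPair {H : Type*} [NormedAddCommGroup H] [NormedSpace ℂ H]
    (X Y : Submodule ℂ H) : Prop :=
  FiniteDimensional ℂ ↥(X ⊓ Y) ∧ IsClosed ((X ⊔ Y : Submodule ℂ H) : Set H) ∧
    FiniteDimensional ℂ (H ⧸ (X ⊔ Y))

/-- The index of a Fredholm pair: `dim (X ∩ Y) - dim (H / (X + Y))`. -/
noncomputable def fpIndex {H : Type*} [NormedAddCommGroup H] [NormedSpace ℂ H]
    (X Y : Submodule ℂ H) : ℤ :=
  (finrank ℂ ↥(X ⊓ Y) : ℤ) - (finrank ℂ (H ⧸ (X ⊔ Y)) : ℤ)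


theorem stmt6 {H : Type*} [NormedAddCommGroup H] [InnerProductSpace ℂ H] [CompleteSpace H]
    (X B : Submodule ℂ H) (hXc : IsClosed (X : Set H)) (hBc : IsClosed (B : Set H))
    (hFP : IsFredholmPair X B)
    (F W : Submodule ℂ H) (hF : F = X ⊓ B) (hW : W = (X ⊔ B) ⊓ Xᗮ) :
    IsClosed (W : Set H) ∧
    ∃ φ : ↥W →L[ℂ] ↥X,
      B = F ⊔ LinearMap.range (W.subtype + X.subtype ∘ₗ (φ : ↥W →ₗ[ℂ] ↥X)) ∧
      F ⊓ LinearMap.range (W.subtype + X.subtype ∘ₗ (φ : ↥W →ₗ[ℂ] ↥X)) = ⊥ := by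
  have hFfin' : FiniteDimensional ℂ ↥F := hF ▸ hFP.1
  have hWc : IsClosed (W : Set H) := by
    rw [hW, Submodule.coe_inf]
    exact hFP.2.1.inter X.isClosed_orthogonal
  refine ⟨hWc, ?_⟩
  haveI : CompleteSpace ↥X := hXc.completeSpace_coe
  haveI : CompleteSpace ↥W := hWc.completeSpace_coe
  set B' : Submodule ℂ H := Fᗮ ⊓ B with hB'
  have hB'c : IsClosed (B' : Set H) := by
    rw [hB', Submodule.coe_inf]
    exact F.isClosed_orthogonal.inter hBc
  haveI : CompleteSpace ↥B' := hB'c.completeSpace_coe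
  have hFle : F ≤ X := hF ▸ inf_le_left
  have hFleB : F ≤ B := hF ▸ inf_le_right
  -- basic facts about projection to Xᗮ
  set P : H →L[ℂ] ↥Xᗮ := Submodule.orthogonalProjectionOnto Xᗮ with hP
  have hPX : ∀ x ∈ X, P x = 0 := fun x hx =>
    Submodule.orthogonalProjectionOnto_apply_of_mem_orthogonal
      (X.le_orthogonal_orthogonal hx)
  have hsub : ∀ v : H, v - (P v : H) ∈ X := by
    intro v
    have h : v - (P v : H) ∈ Xᗮᗮ := Submodule.sub_starProjection_mem_orthogonal (K := Xᗮ) v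
    rwa [Submodule.orthogonal_orthogonal] at h
  -- the map Q : B' → W
  have hq : ∀ b : ↥B', (Xᗮ.subtypeL ∘L (P ∘L B'.subtypeL)) b ∈ W := by
    intro b
    show (P (b : H) : H) ∈ W
    rw [hW]
    refine ⟨?_, (P (b : H)).2⟩
    have h1 : (b : H) - (P (b : H) : H) ∈ X := hsub b.1
    have h2 : (b : H) ∈ X ⊔ B := Submodule.mem_sup_right b.2.2
    have h3 : (P (b : H) : H) = (b : H) - ((b : H) - (P (b : H) : H)) := by abel
    rw [h3]
    exact Submodule.sub_mem _ h2 (Submodule.mem_sup_left h1)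
  set Q : ↥B' →L[ℂ] ↥W :=
    ContinuousLinearMap.codRestrict (Xᗮ.subtypeL ∘L (P ∘L B'.subtypeL)) W hq with hQ
  have hQval : ∀ b : ↥B', ((Q b : H)) = (P (b : H) : H) := fun b => rfl
  have hker : Q.ker = ⊥ := by
    rw [LinearMap.ker_eq_bot']
    intro b hb
    have h0 : (P (b : H) : H) = 0 := by
      have := congrArg (Subtype.val) hb
      rwa [ContinuousLinearMap.coe_coe, hQval] at this
    have hbX : (b : H) ∈ X := by
      have := hsub b.1
      rwa [h0, sub_zero] at this
    have hbF : (b : H) ∈ F := hF ▸ ⟨hbX, b.2.2⟩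
    have hz : (b : H) = 0 := by
      have h := (Submodule.mem_orthogonal F (b : H)).mp b.2.1 _ hbF
      simpa [inner_self_eq_zero] using h
    exact Subtype.ext hz
  have hrange : Q.range = ⊤ := by
    rw [LinearMap.range_eq_top]
    intro w
    have hWle : W ≤ (X ⊔ B) ⊓ Xᗮ := le_of_eq hW
    obtain ⟨hwXB, hwX⟩ := hWle w.2
    obtain ⟨x, hx, b, hb, hxb⟩ := Submodule.mem_sup.mp hwXB
    set f : H := (Submodule.orthogonalProjectionOnto F b : H) with hf
    have hfF : f ∈ F := (Submodule.orthogonalProjectionOnto F b).2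
    have hb'' : b - f ∈ B' :=
      ⟨Submodule.sub_starProjection_mem_orthogonal b, B.sub_mem hb (hFleB hfF)⟩
    refine ⟨⟨b - f, hb''⟩, ?_⟩
    apply Subtype.ext
    rw [ContinuousLinearMap.coe_coe, hQval]
    have hbw : b = (w : H) - x := eq_sub_of_add_eq' hxb
    have hcalc : P (b - f) = P (w : H) - P x - P f := by
      rw [hbw]; simp [map_sub]
    show (P (b - f) : H) = (w : H)
    rw [hcalc, hPX x hx, hPX f (hFle hfF), sub_zero, sub_zero]
    exact Submodule.starProjection_eq_self_iff.mpr hwX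
  set e : ↥B' ≃L[ℂ] ↥W := ContinuousLinearEquiv.ofBijective Q hker hrange with he
  -- φ
  have hψ : ∀ w : ↥W, (B'.subtypeL ∘L (e.symm : ↥W →L[ℂ] ↥B') - W.subtypeL) w ∈ X := by
    intro w
    show ((e.symm w : H) - (w : H)) ∈ X
    have h1 : Q (e.symm w) = w := e.apply_symm_apply w
    have h2 : (P ((e.symm w : ↥B') : H) : H) = (w : H) := by
      rw [← hQval]; exact congrArg Subtype.val h1
    have := hsub ((e.symm w : ↥B') : H)
    rwa [h2] at this
  set φ : ↥W →L[ℂ] ↥X :=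
    ContinuousLinearMap.codRestrict (B'.subtypeL ∘L (e.symm : ↥W →L[ℂ] ↥B') - W.subtypeL) X hψ
    with hφ
  have hval : ∀ w : ↥W,
      (W.subtype + X.subtype ∘ₗ (φ : ↥W →ₗ[ℂ] ↥X)) w = ((e.symm w : ↥B') : H) := by
    intro w
    show (w : H) + ((e.symm w : H) - (w : H)) = (e.symm w : H)
    abel
  have hrangeB' : LinearMap.range (W.subtype + X.subtype ∘ₗ (φ : ↥W →ₗ[ℂ] ↥X)) = B' := by
    ext x
    simp only [LinearMap.mem_range]
    constructor
    · rintro ⟨w, rfl⟩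
      rw [hval]
      exact (e.symm w : ↥B').2
    · intro hx
      exact ⟨e ⟨x, hx⟩, by rw [hval, e.symm_apply_apply]⟩
  refine ⟨φ, ?_, ?_⟩
  · rw [hrangeB']
    apply le_antisymm
    · intro b hb
      have hfF : (Submodule.orthogonalProjectionOnto F b : H) ∈ F := (Submodule.orthogonalProjectionOnto F b).2
      have h1 : b - (Submodule.orthogonalProjectionOnto F b : H) ∈ B' :=
        ⟨Submodule.sub_starProjection_mem_orthogonal b, B.sub_mem hb (hFleB hfF)⟩
      have hd : b = (Submodule.orthogonalProjectionOnto F b : H) + (b - (Submodule.orthogonalProjectionOnto F b : H)) := by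
        abel
      rw [hd]
      exact Submodule.add_mem_sup hfF h1
    · exact sup_le hFleB (hB' ▸ inf_le_right)
  · rw [hrangeB', eq_bot_iff]
    rintro x ⟨hxF, hxB'⟩
    have h := (Submodule.mem_orthogonal F x).mp hxB'.1 x hxF
    simpa [Submodule.mem_bot, inner_self_eq_zero] using h
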